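/- Let Φ be a root system of type A_n (Weyl group S_{n+1}) and let I, J be subsets of a fixed base Δ. If I and J are associate under W(A_n) = S_{n+1}, then the multisets of sizes of connected components of I and of J (as subsets of the Dynkin diagram A_n) are equal; conversely, if these multisets are equal, then I and J are associate under S_{n+1}. -/

import Mathlib

/-- The connected component of `i` inside a subset `I` of the vertices `{0,...,n-1}` of the
Dynkin diagram `A_n` (a path): the set of `j ∈ I` such that the whole interval between `i`
and `j` lies in `I`. -/
def pathComp (I : Finset ℕ) (i : ℕ) : Finset ℕ :=
  I.filter fun j => Finset.Icc (min i j) (max i j) ⊆ I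

/-- The multiset of sizes of the connected components of a subset of the path `A_n`. -/
def compSizes (I : Finset ℕ) : Multiset ℕ :=
  (I.image fun i => pathComp I i).val.map Finset.card

/-- The simple root `α_{i+1} = e_i - e_{i+1}` of `A_n`, realized in `ℤ^{n+1}` (0-indexed). -/
def aroot (n : ℕ) (i : ℕ) : Fin (n + 1) → ℤ :=
  fun k => (if (k : ℕ) = i then 1 else 0) + (if (k : ℕ) = i + 1 then -1 else 0)

open Finset

lemma mem_pathComp {I : Finset ℕ} {i j : ℕ} :
    j ∈ pathComp I i ↔ j ∈ I ∧ ∀ m, min i j ≤ m → m ≤ max i j → m ∈ I := by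
  simp only [pathComp, mem_filter, Finset.subset_iff, Finset.mem_Icc, and_imp]

lemma self_mem_pathComp {I : Finset ℕ} {i : ℕ} (hi : i ∈ I) : i ∈ pathComp I i := by
  rw [mem_pathComp]
  refine ⟨hi, fun m h1 h2 => ?_⟩
  have : m = i := by omega
  rwa [this]

lemma pathComp_subset {I : Finset ℕ} {i : ℕ} : pathComp I i ⊆ I := filter_subset _ _

lemma pathComp_eq_of_mem {I : Finset ℕ} {i j : ℕ} (hj : j ∈ pathComp I i) :
    pathComp I j = pathComp I i := by
  rw [mem_pathComp] at hj
  obtain ⟨hjI, hji⟩ := hj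
  ext k
  rw [mem_pathComp, mem_pathComp]
  constructor
  · rintro ⟨hk, hs⟩
    refine ⟨hk, fun m h1 h2 => ?_⟩
    rcases (by omega : (min i j ≤ m ∧ m ≤ max i j) ∨ (min j k ≤ m ∧ m ≤ max j k)) with h | h
    · exact hji m h.1 h.2
    · exact hs m h.1 h.2
  · rintro ⟨hk, hs⟩
    refine ⟨hk, fun m h1 h2 => ?_⟩
    rcases (by omega : (min i j ≤ m ∧ m ≤ max i j) ∨ (min i k ≤ m ∧ m ≤ max i k)) with h | h
    · exact hji m h.1 h.2
    · exact hs m h.1 h.2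

lemma comp_struct (I : Finset ℕ) {i : ℕ} (hi : i ∈ I) :
    ∃ a b, pathComp I i = Finset.Icc a b ∧ (∀ m, a ≤ m → m ≤ b → m ∈ I) ∧
      (∀ x, x + 1 = a → x ∉ I) ∧ (b + 1 ∉ I) ∧ a ≤ i ∧ i ≤ b := by
  have hne : (pathComp I i).Nonempty := ⟨i, self_mem_pathComp hi⟩
  set a := (pathComp I i).min' hne with ha
  set b := (pathComp I i).max' hne with hb
  have hamem := (pathComp I i).min'_mem hne
  have hbmem := (pathComp I i).max'_mem hne
  have hai : a ≤ i := min'_le _ _ (self_mem_pathComp hi)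
  have hib : i ≤ b := le_max' _ _ (self_mem_pathComp hi)
  rw [mem_pathComp] at hamem hbmem
  have hIcc : ∀ m, a ≤ m → m ≤ b → m ∈ I := by
    intro m h1 h2
    rcases le_or_gt m i with h | h
    · exact hamem.2 m (by omega) (by omega)
    · exact hbmem.2 m (by omega) (by omega)
  have hmem' : ∀ m, a ≤ m → m ≤ b → m ∈ pathComp I i := by
    intro m h1 h2
    rw [mem_pathComp]
    refine ⟨hIcc m h1 h2, fun t t1 t2 => hIcc t (by omega) (by omega)⟩
  refine ⟨a, b, ?_, hIcc, ?_, ?_, hai, hib⟩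
  · ext k
    rw [Finset.mem_Icc]
    constructor
    · intro hk
      exact ⟨min'_le _ _ hk, le_max' _ _ hk⟩
    · intro hk
      exact hmem' k hk.1 hk.2
  · intro x hx hxI
    have : x ∈ pathComp I i := by
      rw [mem_pathComp]
      refine ⟨hxI, fun t t1 t2 => ?_⟩
      rcases (by omega : t = x ∨ (a ≤ t ∧ t ≤ b)) with rfl | ht
      · exact hxI
      · exact hIcc t ht.1 ht.2
    have := min'_le _ _ this
    omega
  · intro hxI
    have : b + 1 ∈ pathComp I i := by
      rw [mem_pathComp]
      refine ⟨hxI, fun t t1 t2 => ?_⟩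
      rcases (by omega : t = b + 1 ∨ (a ≤ t ∧ t ≤ b)) with rfl | ht
      · exact hxI
      · exact hIcc t ht.1 ht.2
    have := le_max' _ _ this
    omega

lemma pathComp_sdiff (I : Finset ℕ) {i : ℕ} (hi : i ∈ I) {j : ℕ}
    (hj : j ∈ I \ pathComp I i) :
    pathComp (I \ pathComp I i) j = pathComp I j := by
  rw [Finset.mem_sdiff] at hj
  ext k
  rw [mem_pathComp, mem_pathComp]
  constructor
  · rintro ⟨hk, hs⟩
    rw [Finset.mem_sdiff] at hk
    refine ⟨hk.1, fun m h1 h2 => ?_⟩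
    have := hs m h1 h2
    rw [Finset.mem_sdiff] at this
    exact this.1
  · rintro ⟨hk, hs⟩
    have hnot : ∀ m, min j k ≤ m → m ≤ max j k → m ∉ pathComp I i := by
      intro m h1 h2 hm
      have hjm : j ∈ pathComp I m := by
        rw [mem_pathComp]
        refine ⟨hj.1, fun t t1 t2 => hs t (by omega) (by omega)⟩
      rw [pathComp_eq_of_mem hm] at hjm
      exact hj.2 hjm
    refine ⟨Finset.mem_sdiff.2 ⟨hk, hnot k (by omega) (by omega)⟩, fun m h1 h2 => ?_⟩
    exact Finset.mem_sdiff.2 ⟨hs m h1 h2, hnot m h1 h2⟩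

lemma compSizes_peel (I : Finset ℕ) {i : ℕ} (hi : i ∈ I) :
    compSizes I = (pathComp I i).card ::ₘ compSizes (I \ pathComp I i) := by
  have himg : I.image (fun j => pathComp I j)
      = insert (pathComp I i) ((I \ pathComp I i).image
          (fun j => pathComp (I \ pathComp I i) j)) := by
    ext T
    simp only [Finset.mem_image, Finset.mem_insert]
    constructor
    · rintro ⟨x, hx, rfl⟩
      by_cases hxC : x ∈ pathComp I i
      · exact Or.inl (pathComp_eq_of_mem hxC)
      · refine Or.inr ⟨x, Finset.mem_sdiff.2 ⟨hx, hxC⟩, ?_⟩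
        exact pathComp_sdiff I hi (Finset.mem_sdiff.2 ⟨hx, hxC⟩)
    · rintro (rfl | ⟨x, hx, rfl⟩)
      · exact ⟨i, hi, rfl⟩
      · exact ⟨x, (Finset.mem_sdiff.1 hx).1, (pathComp_sdiff I hi hx).symm⟩
  have hnotmem : pathComp I i ∉ (I \ pathComp I i).image
      (fun j => pathComp (I \ pathComp I i) j) := by
    intro hmem
    rw [Finset.mem_image] at hmem
    obtain ⟨x, hx, hteq⟩ := hmem
    have hxmem : x ∈ pathComp (I \ pathComp I i) x := self_mem_pathComp hx
    rw [hteq] at hxmem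
    exact (Finset.mem_sdiff.1 hx).2 hxmem
  rw [compSizes, himg, Finset.insert_val_of_notMem hnotmem, Multiset.map_cons]
  rfl

def Dset (I : Finset ℕ) : Finset ℕ := I ∪ I.image (· + 1)

def PathAssoc (I J : Finset ℕ) : Prop :=
  ∃ f : ℕ → ℕ, Set.InjOn f ↑(Dset I) ∧
    (∀ i ∈ I, f i ∈ J ∧ f (i + 1) = f i + 1) ∧ ∀ j ∈ J, ∃ i ∈ I, f i = j

lemma mem_Dset {I : Finset ℕ} {x : ℕ} :
    x ∈ Dset I ↔ x ∈ I ∨ ∃ i ∈ I, i + 1 = x := by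
  simp [Dset, Finset.mem_union, Finset.mem_image]

lemma mapsD {I J : Finset ℕ} {f : ℕ → ℕ}
    (hmap : ∀ i ∈ I, f i ∈ J ∧ f (i + 1) = f i + 1) :
    ∀ x ∈ Dset I, f x ∈ Dset J := by
  intro x hx
  rw [mem_Dset] at hx ⊢
  rcases hx with hx | ⟨i, hi, rfl⟩
  · exact Or.inl (hmap x hx).1
  · exact Or.inr ⟨f i, (hmap i hi).1, ((hmap i hi).2).symm⟩

lemma compSizes_empty : compSizes ∅ = 0 := rfl

lemma eq_empty_of_compSizes_eq_zero {J : Finset ℕ} (h : compSizes J = 0) : J = ∅ := by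
  by_contra hne
  obtain ⟨j, hj⟩ := Finset.nonempty_iff_ne_empty.2 hne
  have : (pathComp J j).card ∈ compSizes J :=
    Multiset.mem_map.2 ⟨pathComp J j, Finset.mem_image.2 ⟨j, hj, rfl⟩, rfl⟩
  rw [h] at this
  exact absurd this (Multiset.notMem_zero _)

lemma pathAssoc_compSizes : ∀ N I J, Finset.card I ≤ N → PathAssoc I J →
    compSizes I = compSizes J := by
  intro N
  induction N with
  | zero =>
    intro I J hcard hPA
    have hIe : I = ∅ := Finset.card_eq_zero.1 (Nat.le_zero.1 hcard)
    subst hIe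
    obtain ⟨f, _, _, hsurj⟩ := hPA
    have hJe : J = ∅ := by
      by_contra hne
      obtain ⟨j, hj⟩ := Finset.nonempty_iff_ne_empty.2 hne
      obtain ⟨i, hi, _⟩ := hsurj j hj
      exact absurd hi (Finset.notMem_empty i)
    subst hJe; rfl
  | succ N ih =>
    intro I J hcard hPA
    by_cases hIe : I = ∅
    · subst hIe
      obtain ⟨f, _, _, hsurj⟩ := hPA
      have hJe : J = ∅ := by
        by_contra hne
        obtain ⟨j, hj⟩ := Finset.nonempty_iff_ne_empty.2 hne
        obtain ⟨i, hi, _⟩ := hsurj j hj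
        exact absurd hi (Finset.notMem_empty i)
      subst hJe; rfl
    obtain ⟨i, hi⟩ := Finset.nonempty_iff_ne_empty.2 hIe
    obtain ⟨f, hinj, hmap, hsurj⟩ := hPA
    obtain ⟨a, b, hC, hIccI, haL, hbR, hai, hib⟩ := comp_struct I hi
    -- basic memberships
    have haI : a ∈ I := hIccI a le_rfl (by omega)
    have hmemC : ∀ m, a ≤ m → m ≤ b → m ∈ pathComp I i := by
      intro m h1 h2; rw [hC, Finset.mem_Icc]; omega
    have hmemI : ∀ m, m ∈ pathComp I i → (a ≤ m ∧ m ≤ b) := by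
      intro m hm; rw [hC, Finset.mem_Icc] at hm; omega
    have hDI : ∀ m, a ≤ m → m ≤ b + 1 → m ∈ Dset I := by
      intro m h1 h2
      rw [mem_Dset]
      rcases (by omega : m ≤ b ∨ m = b + 1) with h | rfl
      · exact Or.inl (hIccI m h1 h)
      · exact Or.inr ⟨b, hIccI b (by omega) le_rfl, rfl⟩
    -- f is arithmetic along the component
    have hstep : ∀ t, a + t ≤ b + 1 → f (a + t) = f a + t := by
      intro t
      induction t with
      | zero => simp
      | succ t iht =>
        intro ht
        have h1 : f (a + t + 1) = f (a + t) + 1 := (hmap (a + t) (hIccI _ (by omega) (by omega))).2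
        have h2 := iht (by omega)
        show f (a + t + 1) = f a + (t + 1)
        omega
    have hfval : ∀ m, a ≤ m → m ≤ b + 1 → f m = f a + (m - a) := by
      intro m h1 h2
      have := hstep (m - a) (by omega)
      rw [(by omega : a + (m - a) = m)] at this
      omega
    -- the image component
    have hfaJ : f a ∈ J := (hmap a haI).1
    obtain ⟨c, d, hC', hIccJ, hcL, hdR, hcfa, hfad⟩ := comp_struct J hfaJ
    -- c = f a
    have hcfa' : c = f a := by
      by_contra hne
      have hc1 : c ≤ f a - 1 := by omega
      have : f a - 1 ∈ J := hIccJ (f a - 1) (by omega) (by omega)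
      obtain ⟨i', hi', hfi'⟩ := hsurj _ this
      have h1 : f (i' + 1) = f a := by
        have := (hmap i' hi').2
        omega
      have : i' + 1 = a := by
        apply hinj (Finset.mem_coe.2 (mem_Dset.2 (Or.inr ⟨i', hi', rfl⟩)))
          (Finset.mem_coe.2 (hDI a le_rfl (by omega)))
        rw [h1]
      exact haL i' this hi'
    -- d = f a + (b - a)
    have hdval : d = f a + (b - a) := by
      have hle : f a + (b - a) ≤ d := by
        have hfbJ : f b ∈ J := (hmap b (hIccI b (by omega) le_rfl)).1
        have hfb : f b = f a + (b - a) := hfval b (by omega) (by omega)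
        have : f b ∈ pathComp J (f a) := by
          rw [mem_pathComp]
          refine ⟨hfbJ, fun m h1 h2 => ?_⟩
          have hm : f a ≤ m ∧ m ≤ f a + (b - a) := by omega
          have hmemJ := (hmap (a + (m - f a)) (hIccI _ (by omega) (by omega))).1
          have h2' : f (a + (m - f a)) = m := by
            have := hfval (a + (m - f a)) (by omega) (by omega)
            omega
          rwa [h2'] at hmemJ
        rw [hC', Finset.mem_Icc] at this
        omega
      by_contra hne
      have : f a + (b - a) + 1 ∈ J := hIccJ _ (by omega) (by omega)
      obtain ⟨i', hi', hfi'⟩ := hsurj _ this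
      have hfb1 : f (b + 1) = f a + (b - a) + 1 := by
        have := hfval (b + 1) (by omega) le_rfl
        omega
      have : i' = b + 1 := by
        apply hinj (Finset.mem_coe.2 (mem_Dset.2 (Or.inl hi')))
          (Finset.mem_coe.2 (hDI (b + 1) (by omega) le_rfl))
        rw [hfi', hfb1]
      subst this
      exact hbR hi'
    -- component of J at f a is pathComp J (f a) with card equal
    have hcards : (pathComp I i).card = (pathComp J (f a)).card := by
      rw [hC, hC', Nat.card_Icc, Nat.card_Icc]
      omega
    -- f restricted works for the smaller sets
    set I' := I \ pathComp I i with hI'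
    set J' := J \ pathComp J (f a) with hJ'
    have hmemC' : ∀ m, m ∈ pathComp J (f a) ↔ (c ≤ m ∧ m ≤ d) := by
      intro m; rw [hC', Finset.mem_Icc]
    have hsubD : (Dset I' : Set ℕ) ⊆ (Dset I : Set ℕ) := by
      intro x hx
      simp only [Finset.coe_subset, Finset.mem_coe] at *
      rw [mem_Dset] at hx ⊢
      rcases hx with hx | ⟨i', hi', rfl⟩
      · exact Or.inl (Finset.mem_sdiff.1 hx).1
      · exact Or.inr ⟨i', (Finset.mem_sdiff.1 hi').1, rfl⟩
    have hnotC : ∀ i', i' ∈ I' → f i' ∉ pathComp J (f a) := by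
      intro i' hi' hmem
      rw [hmemC'] at hmem
      have : f i' = f (a + (f i' - f a)) := by
        rw [hfval (a + (f i' - f a)) (by omega) (by omega)]
        omega
      have heq : i' = a + (f i' - f a) := by
        apply hinj (Finset.mem_coe.2 (mem_Dset.2 (Or.inl (Finset.mem_sdiff.1 hi').1)))
          (Finset.mem_coe.2 (hDI _ (by omega) (by omega)))
        exact this
      have : i' ∈ pathComp I i := hmemC i' (by omega) (by omega)
      exact (Finset.mem_sdiff.1 hi').2 this
    have hPA' : PathAssoc I' J' := by
      refine ⟨f, hinj.mono hsubD, ?_, ?_⟩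
      · intro i' hi'
        have hi'I : i' ∈ I := (Finset.mem_sdiff.1 hi').1
        exact ⟨Finset.mem_sdiff.2 ⟨(hmap i' hi'I).1, hnotC i' hi'⟩, (hmap i' hi'I).2⟩
      · intro j hj
        have hjJ : j ∈ J := (Finset.mem_sdiff.1 hj).1
        obtain ⟨i', hi', hfi'⟩ := hsurj j hjJ
        refine ⟨i', Finset.mem_sdiff.2 ⟨hi', ?_⟩, hfi'⟩
        intro hmem
        have hm := hmemI i' hmem
        have : f i' ∈ pathComp J (f a) := by
          rw [hmemC']
          rw [hfval i' hm.1 (by omega)]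
          omega
        rw [hfi'] at this
        exact (Finset.mem_sdiff.1 hj).2 this
    have hcard' : I'.card ≤ N := by
      have h1 : (pathComp I i) ⊆ I := pathComp_subset
      have h2 := Finset.card_sdiff_of_subset h1
      have h3 : 1 ≤ (pathComp I i).card := Finset.card_pos.2 ⟨i, self_mem_pathComp hi⟩
      rw [hI']
      omega
    have hrec := ih I' J' hcard' hPA'
    rw [compSizes_peel I hi, compSizes_peel J hfaJ, hcards, ← hI', ← hJ', hrec]

lemma compSizes_pathAssoc : ∀ N I J, Finset.card I ≤ N → compSizes I = compSizes J →
    PathAssoc I J := by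
  intro N
  induction N with
  | zero =>
    intro I J hcard hcs
    have hIe : I = ∅ := Finset.card_eq_zero.1 (Nat.le_zero.1 hcard)
    subst hIe
    have hJe : J = ∅ := eq_empty_of_compSizes_eq_zero (by rw [← hcs]; rfl)
    subst hJe
    exact ⟨id, Set.injOn_id _, by simp, by simp⟩
  | succ N ih =>
    intro I J hcard hcs
    by_cases hIe : I = ∅
    · subst hIe
      have hJe : J = ∅ := eq_empty_of_compSizes_eq_zero (by rw [← hcs]; rfl)
      subst hJe
      exact ⟨id, Set.injOn_id _, by simp, by simp⟩
    obtain ⟨i, hi⟩ := Finset.nonempty_iff_ne_empty.2 hIe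
    obtain ⟨a, b, hC, hIccI, haL, hbR, hai, hib⟩ := comp_struct I hi
    have hpeelI := compSizes_peel I hi
    -- find a component of J with the same size
    have hmem : (pathComp I i).card ∈ compSizes J := by
      rw [← hcs, hpeelI]; exact Multiset.mem_cons_self _ _
    obtain ⟨T, hT, hTcard⟩ := Multiset.mem_map.1 hmem
    obtain ⟨j, hj, hTj⟩ := Finset.mem_image.1 hT
    obtain ⟨c, d, hC', hIccJ, hcL, hdR, hcj, hjd⟩ := comp_struct J hj
    subst hTj
    have hk : b + 1 - a = d + 1 - c := by
      rw [hC, hC', Nat.card_Icc, Nat.card_Icc] at hTcard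
      omega
    have hpeelJ := compSizes_peel J hj
    have hcs' : compSizes (I \ pathComp I i) = compSizes (J \ pathComp J j) := by
      have := hcs
      rw [hpeelI, hpeelJ, hTcard] at this
      exact (Multiset.cons_inj_right _).1 this
    have hcard' : (I \ pathComp I i).card ≤ N := by
      have h1 : (pathComp I i) ⊆ I := pathComp_subset
      have h2 := Finset.card_sdiff_of_subset h1
      have h3 : 1 ≤ (pathComp I i).card := Finset.card_pos.2 ⟨i, self_mem_pathComp hi⟩
      omega
    obtain ⟨f', hinj', hmap', hsurj'⟩ := ih _ _ hcard' hcs'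
    set I' := I \ pathComp I i with hI'
    set J' := J \ pathComp J j with hJ'
    -- block facts
    have hmemCI : ∀ m, m ∈ pathComp I i ↔ (a ≤ m ∧ m ≤ b) := by
      intro m; rw [hC, Finset.mem_Icc]
    have hmemCJ : ∀ m, m ∈ pathComp J j ↔ (c ≤ m ∧ m ≤ d) := by
      intro m; rw [hC', Finset.mem_Icc]
    have hBD2 : ∀ x ∈ Dset I', ¬(a ≤ x ∧ x ≤ b + 1) := by
      intro x hx hax
      rw [mem_Dset] at hx
      rcases hx with hx | ⟨y, hy, rfl⟩
      · rw [Finset.mem_sdiff, hmemCI] at hx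
        rcases (by omega : x ≤ b ∨ x = b + 1) with h | rfl
        · exact hx.2 ⟨hax.1, h⟩
        · exact hbR hx.1
      · rw [Finset.mem_sdiff, hmemCI] at hy
        rcases (by omega : (a ≤ y ∧ y ≤ b) ∨ y + 1 = a) with h | h
        · exact hy.2 h
        · exact haL y h hy.1
    have hBD2' : ∀ x ∈ Dset J', ¬(c ≤ x ∧ x ≤ d + 1) := by
      intro x hx hax
      rw [mem_Dset] at hx
      rcases hx with hx | ⟨y, hy, rfl⟩
      · rw [Finset.mem_sdiff, hmemCJ] at hx
        rcases (by omega : x ≤ d ∨ x = d + 1) with h | rfl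
        · exact hx.2 ⟨hax.1, h⟩
        · exact hdR hx.1
      · rw [Finset.mem_sdiff, hmemCJ] at hy
        rcases (by omega : (c ≤ y ∧ y ≤ d) ∨ y + 1 = c) with h | h
        · exact hy.2 h
        · exact hcL y h hy.1
    have hBD1 : ∀ x ∈ Dset I, (a ≤ x ∧ x ≤ b + 1) ∨ x ∈ Dset I' := by
      intro x hx
      rw [mem_Dset] at hx
      by_cases hblk : a ≤ x ∧ x ≤ b + 1
      · exact Or.inl hblk
      · right
        rw [mem_Dset]
        rcases hx with hx | ⟨y, hy, rfl⟩
        · exact Or.inl (Finset.mem_sdiff.2 ⟨hx, fun hm => hblk (by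
            rw [hmemCI] at hm; omega)⟩)
        · refine Or.inr ⟨y, Finset.mem_sdiff.2 ⟨hy, fun hm => hblk (by
            rw [hmemCI] at hm; omega)⟩, rfl⟩
    have hmapsD' : ∀ x ∈ Dset I', f' x ∈ Dset J' := mapsD hmap'
    -- the combined function
    refine ⟨fun x => if a ≤ x ∧ x ≤ b + 1 then c + (x - a) else f' x, ?_, ?_, ?_⟩
    · intro x hx y hy hxy
      rw [Finset.mem_coe] at hx hy
      simp only at hxy
      rcases hBD1 x hx with hxb | hxD <;> rcases hBD1 y hy with hyb | hyD
      · rw [if_pos hxb, if_pos hyb] at hxy; omega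
      · rw [if_pos hxb, if_neg (hBD2 y hyD)] at hxy
        exact absurd ⟨by omega, by omega⟩ (hBD2' (f' y) (hmapsD' y hyD))
      · rw [if_neg (hBD2 x hxD), if_pos hyb] at hxy
        exact absurd ⟨by omega, by omega⟩ (hBD2' (f' x) (hmapsD' x hxD))
      · rw [if_neg (hBD2 x hxD), if_neg (hBD2 y hyD)] at hxy
        exact hinj' (Finset.mem_coe.2 hxD) (Finset.mem_coe.2 hyD) hxy
    · intro x hx
      dsimp only
      by_cases hxC : x ∈ pathComp I i
      · rw [hmemCI] at hxC
        rw [if_pos (by omega), if_pos (by omega)]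
        constructor
        · exact hIccJ _ (by omega) (by omega)
        · omega
      · have hxI' : x ∈ I' := Finset.mem_sdiff.2 ⟨hx, hxC⟩
        rw [if_neg (hBD2 x (mem_Dset.2 (Or.inl hxI'))),
          if_neg (hBD2 (x + 1) (mem_Dset.2 (Or.inr ⟨x, hxI', rfl⟩)))]
        exact ⟨(Finset.mem_sdiff.1 (hmap' x hxI').1).1, (hmap' x hxI').2⟩
    · intro j' hj'
      dsimp only
      by_cases hjC : j' ∈ pathComp J j
      · rw [hmemCJ] at hjC
        refine ⟨a + (j' - c), hIccI _ (by omega) (by omega), ?_⟩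
        rw [if_pos (by omega)]
        omega
      · have hjJ' : j' ∈ J' := Finset.mem_sdiff.2 ⟨hj', hjC⟩
        obtain ⟨i', hi', hfi'⟩ := hsurj' j' hjJ'
        refine ⟨i', (Finset.mem_sdiff.1 hi').1, ?_⟩
        rw [if_neg (hBD2 i' (mem_Dset.2 (Or.inl hi')))]
        exact hfi'

lemma delta_eq {m : ℕ} {u w x y : Fin m} (huw : u ≠ w) (hxy : x ≠ y) :
    ((fun k => (if k = u then (1:ℤ) else 0) + (if k = w then -1 else 0)) =
      (fun k => (if k = x then (1:ℤ) else 0) + (if k = y then -1 else 0))) ↔ (u = x ∧ w = y) := by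
  constructor
  · intro h
    have h1 := congrFun h u
    have h2 := congrFun h w
    simp only [if_pos rfl, if_neg huw, if_neg (Ne.symm huw)] at h1 h2
    constructor
    · by_contra hne
      rw [if_neg hne] at h1
      split_ifs at h1 <;> omega
    · by_contra hne
      rw [if_neg hne] at h2
      split_ifs at h2 <;> omega
  · rintro ⟨rfl, rfl⟩; rfl

lemma aroot_delta (n i : ℕ) (hi : i < n) :
    aroot n i = fun k => (if k = (⟨i, by omega⟩ : Fin (n + 1)) then (1:ℤ) else 0) +
      (if k = (⟨i + 1, by omega⟩ : Fin (n + 1)) then -1 else 0) := by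
  funext k
  simp only [aroot, Fin.ext_iff]

lemma aroot_shift_delta (n i : ℕ) (hi : i < n) (σ : Equiv.Perm (Fin (n + 1))) :
    (fun k => aroot n i (σ.symm k)) =
      fun k => (if k = σ ⟨i, by omega⟩ then (1:ℤ) else 0) +
        (if k = σ ⟨i + 1, by omega⟩ then -1 else 0) := by
  funext k
  simp only [aroot]
  congr 1
  · congr 1
    simp only [eq_iff_iff]
    rw [show ((σ.symm k : ℕ) = i) ↔ (σ.symm k = ⟨i, by omega⟩) from
      ⟨fun h => Fin.ext h, fun h => by rw [h]⟩, Equiv.symm_apply_eq]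
  · congr 1
    simp only [eq_iff_iff]
    rw [show ((σ.symm k : ℕ) = i + 1) ↔ (σ.symm k = ⟨i + 1, by omega⟩) from
      ⟨fun h => Fin.ext h, fun h => by rw [h]⟩, Equiv.symm_apply_eq]

lemma aroot_shift_eq (n i j : ℕ) (hi : i < n) (hj : j < n) (σ : Equiv.Perm (Fin (n + 1))) :
    (fun k => aroot n i (σ.symm k)) = aroot n j ↔
      (σ ⟨i, by omega⟩ = ⟨j, by omega⟩ ∧ σ ⟨i + 1, by omega⟩ = ⟨j + 1, by omega⟩) := by
  rw [aroot_shift_delta n i hi σ, aroot_delta n j hj]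
  exact delta_eq
    (fun h => by have := σ.injective h; simp only [Fin.mk.injEq] at this; omega)
    (fun h => by simp only [Fin.mk.injEq] at h; omega)

lemma exists_perm_extend (n : ℕ) (A B : Finset ℕ) (hA : ∀ x ∈ A, x < n + 1)
    (hB : ∀ x ∈ B, x < n + 1) (f : ℕ → ℕ) (hinj : Set.InjOn f ↑A)
    (hmapsto : ∀ x ∈ A, f x ∈ B) (honto : ∀ y ∈ B, ∃ x ∈ A, f x = y) :
    ∃ σ : Equiv.Perm (Fin (n + 1)), ∀ x (hx : x ∈ A),
      σ ⟨x, hA x hx⟩ = ⟨f x, hB _ (hmapsto x hx)⟩ := by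
  classical
  set s : Finset (Fin (n + 1)) := A.attachFin hA with hs
  set t : Finset (Fin (n + 1)) := B.attachFin hB with ht
  have hmem_s : ∀ k : Fin (n + 1), k ∈ s ↔ (k : ℕ) ∈ A := fun k => Finset.mem_attachFin _
  have hmem_t : ∀ k : Fin (n + 1), k ∈ t ↔ (k : ℕ) ∈ B := fun k => Finset.mem_attachFin _
  have hg : ∀ p : {k : Fin (n + 1) // k ∈ s}, (⟨f (p.1 : ℕ), hB _ (hmapsto _ ((hmem_s p.1).1 p.2))⟩ : Fin (n + 1)) ∈ t := by
    intro p
    rw [hmem_t]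
    exact hmapsto _ ((hmem_s p.1).1 p.2)
  let g : {k : Fin (n + 1) // k ∈ s} → {k : Fin (n + 1) // k ∈ t} :=
    fun p => ⟨⟨f (p.1 : ℕ), hB _ (hmapsto _ ((hmem_s p.1).1 p.2))⟩, hg p⟩
  have hgbij : Function.Bijective g := by
    constructor
    · rintro ⟨p, hp⟩ ⟨q, hq⟩ hpq
      simp only [g, Subtype.mk.injEq, Fin.mk.injEq] at hpq
      have := hinj (Finset.mem_coe.2 ((hmem_s p).1 hp)) (Finset.mem_coe.2 ((hmem_s q).1 hq)) hpq
      exact Subtype.ext (Fin.ext this)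
    · rintro ⟨y, hy⟩
      obtain ⟨x, hx, hfx⟩ := honto (y : ℕ) ((hmem_t y).1 hy)
      refine ⟨⟨⟨x, hA x hx⟩, (hmem_s _).2 hx⟩, ?_⟩
      simp only [g]
      exact Subtype.ext (Fin.ext hfx)
  let e := Equiv.ofBijective g hgbij
  have hcards : Fintype.card {k : Fin (n + 1) // ¬ k ∈ s} = Fintype.card {k : Fin (n + 1) // ¬ k ∈ t} := by
    rw [Fintype.card_subtype_compl, Fintype.card_subtype_compl]
    have := Fintype.card_congr e
    simp only [Fintype.card_coe] at this ⊢
    rw [this]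
  let eC : {k : Fin (n + 1) // ¬ k ∈ s} ≃ {k : Fin (n + 1) // ¬ k ∈ t} :=
    Fintype.equivOfCardEq hcards
  refine ⟨(Equiv.sumCompl (· ∈ s)).symm.trans ((e.sumCongr eC).trans (Equiv.sumCompl (· ∈ t))), ?_⟩
  intro x hx
  have hxs : (⟨x, hA x hx⟩ : Fin (n + 1)) ∈ s := (hmem_s _).2 hx
  rw [Equiv.trans_apply, Equiv.trans_apply,
    Equiv.sumCompl_symm_apply_of_pos hxs]
  rfl

/-- Two subsets `I, J` of the base of `A_n` are associate under the Weyl group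
`W(A_n) = S_{n+1}` (acting by permuting the coordinates of `ℤ^{n+1}`) if and only if the
multisets of sizes of their connected components in the Dynkin diagram coincide. -/
theorem stmt7 (n : ℕ) (I J : Finset ℕ) (hI : I ⊆ Finset.range n) (hJ : J ⊆ Finset.range n) :
    (∃ σ : Equiv.Perm (Fin (n + 1)),
        (fun v : Fin (n + 1) → ℤ => fun k => v (σ.symm k)) '' (aroot n '' (I : Set ℕ)) =
          aroot n '' (J : Set ℕ)) ↔
      compSizes I = compSizes J := by
  have hIb : ∀ x ∈ I, x < n := fun x hx => Finset.mem_range.1 (hI hx)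
  have hJb : ∀ x ∈ J, x < n := fun x hx => Finset.mem_range.1 (hJ hx)
  have hDIb : ∀ x ∈ Dset I, x < n + 1 := by
    intro x hx
    rcases mem_Dset.1 hx with h | ⟨i, hi, rfl⟩
    · exact lt_trans (hIb x h) (Nat.lt_succ_self n)
    · exact Nat.succ_lt_succ (hIb i hi)
  have hDJb : ∀ x ∈ Dset J, x < n + 1 := by
    intro x hx
    rcases mem_Dset.1 hx with h | ⟨i, hi, rfl⟩
    · exact lt_trans (hJb x h) (Nat.lt_succ_self n)
    · exact Nat.succ_lt_succ (hJb i hi)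
  constructor
  · rintro ⟨σ, hσ⟩
    apply pathAssoc_compSizes I.card I J le_rfl
    set f : ℕ → ℕ := fun m => if h : m < n + 1 then ((σ ⟨m, h⟩ : Fin (n + 1)) : ℕ) else m
      with hf
    have hfeq : ∀ (x : ℕ) (h : x < n + 1), f x = ((σ ⟨x, h⟩ : Fin (n + 1)) : ℕ) := by
      intro x h
      rw [hf]
      simp only [dif_pos h]
    refine ⟨f, ?_, ?_, ?_⟩
    · intro x hx y hy hxy
      rw [Finset.mem_coe] at hx hy
      have hx' := hDIb x hx
      have hy' := hDIb y hy
      rw [hfeq x hx', hfeq y hy'] at hxy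
      have h2 := σ.injective (Fin.ext hxy)
      rw [Fin.mk.injEq] at h2
      exact h2
    · intro i hi
      have hi' : i < n := hIb i hi
      have hmem : (fun k => aroot n i (σ.symm k)) ∈ aroot n '' (J : Set ℕ) := by
        rw [← hσ]
        exact ⟨aroot n i, ⟨i, hi, rfl⟩, rfl⟩
      obtain ⟨j, hjJ, heq⟩ := hmem
      have hjJ' : j ∈ J := hjJ
      have hj' : j < n := hJb j hjJ'
      obtain ⟨h1, h2⟩ := (aroot_shift_eq n i j hi' hj' σ).1 heq.symm
      constructor
      · rw [hfeq i (by omega), h1]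
        exact hjJ'
      · rw [hfeq (i + 1) (by omega), hfeq i (by omega), h1, h2]
    · intro j hj
      have hj' : j < n := hJb j hj
      have hmem : aroot n j ∈ (fun v : Fin (n + 1) → ℤ => fun k => v (σ.symm k)) ''
          (aroot n '' (I : Set ℕ)) := by
        rw [hσ]
        exact ⟨j, hj, rfl⟩
      obtain ⟨w, ⟨i, hiI, rfl⟩, heq⟩ := hmem
      have hiI' : i ∈ I := hiI
      have hi' : i < n := hIb i hiI'
      obtain ⟨h1, h2⟩ := (aroot_shift_eq n i j hi' hj' σ).1 heq
      refine ⟨i, hiI', ?_⟩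
      rw [hfeq i (by omega), h1]
  · intro hcs
    obtain ⟨f, hinj, hmap, hsurj⟩ := compSizes_pathAssoc I.card I J le_rfl hcs
    have hmapsto : ∀ x ∈ Dset I, f x ∈ Dset J := mapsD hmap
    have honto : ∀ y ∈ Dset J, ∃ x ∈ Dset I, f x = y := by
      intro y hy
      rcases mem_Dset.1 hy with h | ⟨j, hj, rfl⟩
      · obtain ⟨i, hi, hfi⟩ := hsurj y h
        exact ⟨i, mem_Dset.2 (Or.inl hi), hfi⟩
      · obtain ⟨i, hi, hfi⟩ := hsurj j hj
        refine ⟨i + 1, mem_Dset.2 (Or.inr ⟨i, hi, rfl⟩), ?_⟩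
        rw [(hmap i hi).2, hfi]
    obtain ⟨σ, hσ⟩ := exists_perm_extend n (Dset I) (Dset J) hDIb hDJb f hinj hmapsto honto
    refine ⟨σ, ?_⟩
    apply Set.eq_of_subset_of_subset
    · rintro u ⟨w, ⟨i, hiI, rfl⟩, rfl⟩
      have hiI' : i ∈ I := hiI
      have hi' : i < n := hIb i hiI'
      have hfi : f i ∈ J := (hmap i hiI').1
      have hfi' : f i < n := hJb _ hfi
      refine ⟨f i, hfi, ?_⟩
      symm
      rw [aroot_shift_eq n i (f i) hi' hfi' σ]
      constructor
      · exact hσ i (mem_Dset.2 (Or.inl hiI'))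
      · have h1 := hσ (i + 1) (mem_Dset.2 (Or.inr ⟨i, hiI', rfl⟩))
        rw [h1]
        exact Fin.ext ((hmap i hiI').2)
    · rintro u ⟨j, hjJ, rfl⟩
      have hjJ' : j ∈ J := hjJ
      obtain ⟨i, hiI, hfi⟩ := hsurj j hjJ'
      have hi' : i < n := hIb i hiI
      have hj' : j < n := hJb j hjJ'
      refine ⟨aroot n i, ⟨i, hiI, rfl⟩, ?_⟩
      show (fun k => aroot n i (σ.symm k)) = aroot n j
      rw [aroot_shift_eq n i j hi' hj' σ]
      constructor
      · rw [hσ i (mem_Dset.2 (Or.inl hiI))]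
        exact Fin.ext hfi
      · rw [hσ (i + 1) (mem_Dset.2 (Or.inr ⟨i, hiI, rfl⟩))]
        refine Fin.ext ?_
        show f (i + 1) = j + 1
        rw [(hmap i hiI).2, hfi]
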